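/- arXiv:2303.12852 — 7 statements merged into one kernel-verified Lean document; each statement's English description precedes it below -/
import Mathlib

section
/- Let 1 ≤ j < k be integers, r > 0, and α ∈ [π/k, π/(k-1)). Let μ = r(cos α + i sin α). Then the polynomial Q_j(t) = t^k − (sin(kα)/sin(jα)) r^{k−j} t^j + (sin((k−j)α)/sin(jα)) r^k satisfies Q_j(μ) = 0. -/
open Real Polynomial

theorem stmt_2 (j k : ℕ) (hj : 1 ≤ j) (hjk : j < k) (r : ℝ) (hr : 0 < r) (α : ℝ)
    (hα : α ∈ Set.Ico (π / k) (π / ((k : ℝ) - 1)))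
    (μ : ℂ) (hμ : μ = (r : ℂ) * (Complex.cos α + Complex.sin α * Complex.I))
    (Q : Polynomial ℝ)
    (hQ : Q = X ^ k - C (Real.sin (k * α) / Real.sin (j * α) * r ^ (k - j)) * X ^ j
        + C (Real.sin ((k - j : ℕ) * α) / Real.sin (j * α) * r ^ k)) :
    Polynomial.aeval μ Q = 0 := by
  obtain ⟨h1, h2⟩ := hα
  have hk2 : 2 ≤ k := by omega
  have hk1 : (0:ℝ) < (k:ℝ) - 1 := by
    have : (2:ℝ) ≤ k := by exact_mod_cast hk2
    linarith
  have hkpos : (0:ℝ) < k := by linarith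
  have hα0 : 0 < α := lt_of_lt_of_le (by positivity) h1
  have hj1 : (1:ℝ) ≤ j := by exact_mod_cast hj
  have hjα0 : 0 < (j:ℝ) * α := by nlinarith
  have hjk1 : (j:ℝ) ≤ (k:ℝ) - 1 := by
    have : (j:ℝ) + 1 ≤ k := by exact_mod_cast hjk
    linarith
  have hjαπ : (j:ℝ) * α < π := by
    calc (j:ℝ)*α < (j:ℝ) * (π/((k:ℝ)-1)) := by
          exact mul_lt_mul_of_pos_left h2 (by linarith)
      _ ≤ ((k:ℝ)-1) * (π/((k:ℝ)-1)) := by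
          exact mul_le_mul_of_nonneg_right hjk1 (le_of_lt (div_pos Real.pi_pos hk1))
      _ = π := by field_simp
  have hs : Real.sin ((j:ℝ)*α) ≠ 0 := ne_of_gt (Real.sin_pos_of_pos_of_lt_pi hjα0 hjαπ)
  have hpow : (r:ℂ)^(k-j) * (r:ℂ)^j = (r:ℂ)^k := by
    rw [← pow_add]; congr 1; omega
  subst hμ hQ
  simp only [map_add, map_sub, map_mul, map_pow, aeval_X, aeval_C, mul_pow,
    Complex.cos_add_sin_mul_I_pow]
  push_cast [Nat.cast_sub hjk.le]
  rw [sub_mul]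
  simp only [Complex.coe_algebraMap]
  rw [Real.sin_sub]
  have hsc : Complex.sin ((j:ℂ)*(α:ℂ)) ≠ 0 := by
    rw [show ((j:ℂ)*(α:ℂ)) = ((j*α : ℝ):ℂ) by push_cast; ring, ← Complex.ofReal_sin]
    exact_mod_cast hs
  push_cast
  have hsc' : Complex.sin ((α:ℂ)*(j:ℂ)) ≠ 0 := by rwa [mul_comm]
  field_simp
  linear_combination (-1:ℂ) * Complex.sin ((k:ℂ)*α) * (Complex.cos ((α:ℂ)*j) + Complex.sin ((α:ℂ)*j)*Complex.I) * hpow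
end

section
/- Let 1 ≤ j < k be integers, r > 0, and α ∈ [π/k, π/(k-1)). Then the polynomial Q_j(t) = t^k − (sin(kα)/sin(jα)) r^{k−j} t^j + (sin((k−j)α)/sin(jα)) r^k has nonnegative real coefficients and nonzero constant term (i.e., Q_j(0) ≠ 0). -/
open Real Polynomial

theorem stmt_3 (j k : ℕ) (hj : 1 ≤ j) (hjk : j < k) (r : ℝ) (hr : 0 < r) (α : ℝ)
    (hα : α ∈ Set.Ico (π / k) (π / ((k : ℝ) - 1)))
    (Q : Polynomial ℝ)
    (hQ : Q = X ^ k - C (Real.sin (k * α) / Real.sin (j * α) * r ^ (k - j)) * X ^ j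
        + C (Real.sin ((k - j : ℕ) * α) / Real.sin (j * α) * r ^ k)) :
    (∀ i, 0 ≤ Q.coeff i) ∧ Q.eval 0 ≠ 0 := by
  obtain ⟨hα1, hα2⟩ := hα
  have hk2 : 2 ≤ k := by omega
  have hk0 : (0:ℝ) < k := by positivity
  have hkm1 : (0:ℝ) < (k:ℝ) - 1 := by
    have : (2:ℝ) ≤ k := by exact_mod_cast hk2
    linarith
  have hαpos : 0 < α := lt_of_lt_of_le (by positivity) hα1
  -- sin (m α) > 0 for 1 ≤ m ≤ k-1
  have hsin : ∀ m : ℕ, 1 ≤ m → m < k → 0 < Real.sin (m * α) := by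
    intro m hm1 hmk
    apply Real.sin_pos_of_pos_of_lt_pi
    · have : (1:ℝ) ≤ m := by exact_mod_cast hm1
      nlinarith
    · have hmle : (m:ℝ) ≤ (k:ℝ) - 1 := by
        have : (m:ℝ) + 1 ≤ k := by exact_mod_cast hmk
        linarith
      calc (m:ℝ) * α ≤ ((k:ℝ) - 1) * α := by nlinarith
        _ < ((k:ℝ) - 1) * (π / ((k:ℝ) - 1)) := by
            exact mul_lt_mul_of_pos_left hα2 hkm1
        _ = π := by field_simp
  have hsj : 0 < Real.sin (j * α) := hsin j hj hjk
  have hskj : 0 < Real.sin ((k - j : ℕ) * α) := hsin (k - j) (by omega) (by omega)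
  -- sin (k α) ≤ 0
  have hsk : Real.sin (k * α) ≤ 0 := by
    have h1 : π ≤ k * α := by
      calc π = (k:ℝ) * (π / k) := by field_simp
        _ ≤ k * α := by nlinarith
    have h2 : (k:ℝ) * α < 2 * π := by
      have hkle : (k:ℝ) ≤ 2 * ((k:ℝ) - 1) := by
        have : (2:ℝ) ≤ k := by exact_mod_cast hk2
        linarith
      calc (k:ℝ) * α < (k:ℝ) * (π / ((k:ℝ) - 1)) := by
            exact mul_lt_mul_of_pos_left hα2 hk0
        _ ≤ 2 * ((k:ℝ) - 1) * (π / ((k:ℝ) - 1)) := by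
            apply mul_le_mul_of_nonneg_right hkle
            positivity
        _ = 2 * π := by field_simp
    have : Real.sin (k * α) = Real.sin (k * α - 2 * π) := by
      rw [Real.sin_sub_two_pi]
    rw [this]
    apply Real.sin_nonpos_of_nonpos_of_neg_pi_le <;> linarith
  have hc1 : Real.sin (k * α) / Real.sin (j * α) * r ^ (k - j) ≤ 0 := by
    apply mul_nonpos_of_nonpos_of_nonneg
    · exact div_nonpos_of_nonpos_of_nonneg hsk hsj.le
    · positivity
  have hc0 : 0 < Real.sin ((k - j : ℕ) * α) / Real.sin (j * α) * r ^ k := by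
    positivity
  constructor
  · intro i
    subst hQ
    simp only [coeff_add, coeff_sub, coeff_C_mul, coeff_X_pow, coeff_C]
    split_ifs <;> nlinarith
  · subst hQ
    have hk0' : k ≠ 0 := by omega
    have hj0' : j ≠ 0 := by omega
    simp [zero_pow hk0', zero_pow hj0']
    exact ⟨⟨hskj.ne', hsj.ne'⟩, fun h => absurd h hr.ne'⟩
end

section
/- Let k ≥ 2, r > 0, and α ∈ (π/k, π/(k-1)), and let μ = r(cos α + i sin α). Define Q(t) = (1/(k−1)) Σ_{j=1}^{k−1} Q_j(t), where Q_j(t) = t^k − (sin(kα)/sin(jα)) r^{k−j} t^j + (sin((k−j)α)/sin(jα)) r^k. Then Q is a monic polynomial of degree k with all coefficients (in degrees 0 through k) strictly positive, and Q(μ) = 0. -/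
open Real Polynomial

theorem stmt_4 (k : ℕ) (hk : 2 ≤ k) (r : ℝ) (hr : 0 < r) (α : ℝ)
    (hα : α ∈ Set.Ioo (π / k) (π / ((k : ℝ) - 1)))
    (μ : ℂ) (hμ : μ = (r : ℂ) * (Complex.cos α + Complex.sin α * Complex.I))
    (Qj : ℕ → Polynomial ℝ)
    (hQj : ∀ j, Qj j = X ^ k - C (Real.sin (k * α) / Real.sin (j * α) * r ^ (k - j)) * X ^ j
        + C (Real.sin ((k - j : ℕ) * α) / Real.sin (j * α) * r ^ k))
    (Q : Polynomial ℝ)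
    (hQ : Q = C (1 / ((k : ℝ) - 1)) * ∑ j ∈ Finset.Ico 1 k, Qj j) :
    Q.Monic ∧ Q.natDegree = k ∧ (∀ i ≤ k, 0 < Q.coeff i) ∧ Polynomial.aeval μ Q = 0 := by
  obtain ⟨hα1, hα2⟩ := hα
  have hk2 : (2:ℝ) ≤ (k:ℝ) := by exact_mod_cast hk
  have hk1 : (1:ℝ) ≤ (k:ℝ) - 1 := by linarith
  have hkr : (0:ℝ) < (k:ℝ) - 1 := by linarith
  have hα0 : 0 < α := lt_trans (by positivity) hα1
  -- sin (j α) > 0 for 1 ≤ j ≤ k-1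
  have hsin : ∀ j : ℕ, 1 ≤ j → j < k → 0 < Real.sin (j * α) := by
    intro j h1 h2
    apply Real.sin_pos_of_pos_of_lt_pi
    · have : (1:ℝ) ≤ (j:ℝ) := by exact_mod_cast h1
      nlinarith
    · have hjk : (j:ℝ) ≤ (k:ℝ) - 1 := by
        have : (j:ℝ) + 1 ≤ (k:ℝ) := by exact_mod_cast h2
        linarith
      calc (j:ℝ) * α ≤ ((k:ℝ)-1) * α := by nlinarith
        _ < ((k:ℝ)-1) * (π / ((k:ℝ)-1)) := by nlinarith
        _ = π := by field_simp
  -- sin (k α) < 0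
  have hsk : Real.sin (k * α) < 0 := by
    have hkpos : (0:ℝ) < (k:ℝ) := by linarith
    have h1 : π < (k:ℝ) * α := by
      calc π = (k:ℝ) * (π / k) := by field_simp
        _ < (k:ℝ) * α := by nlinarith
    have h2 : (k:ℝ) * α < 2 * π := by
      have h5 : (k:ℝ) * α < (k:ℝ) * (π / ((k:ℝ)-1)) := by nlinarith [pi_pos]
      have h3 : (k:ℝ) * (π / ((k:ℝ)-1)) ≤ 2 * π := by
        rw [mul_div_assoc', div_le_iff₀ hkr]
        nlinarith [pi_pos]
      linarith
    have := Real.sin_pos_of_pos_of_lt_pi (x := (k:ℝ) * α - π) (by linarith) (by linarith)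
    rw [Real.sin_sub_pi] at this
    linarith
  -- coefficient formula
  have hQjc : ∀ j i, (Qj j).coeff i =
      (if i = k then 1 else 0)
      - (if i = j then Real.sin (k * α) / Real.sin (j * α) * r ^ (k - j) else 0)
      + (if i = 0 then Real.sin ((k - j : ℕ) * α) / Real.sin (j * α) * r ^ k else 0) := by
    intro j i
    rw [hQj]
    simp only [coeff_add, coeff_sub, coeff_C_mul, coeff_X_pow, coeff_C, mul_ite, mul_one, mul_zero]
  have hcoeffk : Q.coeff k = 1 := by
    rw [hQ, coeff_C_mul, finset_sum_coeff]
    have h : ∀ j ∈ Finset.Ico 1 k, (Qj j).coeff k = 1 := by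
      intro j hj
      simp only [Finset.mem_Ico] at hj
      rw [hQjc, if_pos rfl, if_neg (by omega), if_neg (by omega)]
      ring
    rw [Finset.sum_congr rfl h, Finset.sum_const, Nat.card_Ico, nsmul_eq_mul, mul_one]
    have h2 : ((k - 1 : ℕ) : ℝ) = (k:ℝ) - 1 := by
      have : 1 ≤ k := by omega
      push_cast [this]; ring
    rw [h2]; field_simp
  have hcoeffmid : ∀ i, 1 ≤ i → i < k →
      Q.coeff i = (1/((k:ℝ)-1)) * (-(Real.sin (k*α)/Real.sin (i*α) * r^(k-i))) := by
    intro i h1 h2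
    rw [hQ, coeff_C_mul, finset_sum_coeff, Finset.sum_eq_single i]
    · rw [hQjc, if_neg (by omega), if_pos rfl, if_neg (by omega)]; ring
    · intro j hj hne
      simp only [Finset.mem_Ico] at hj
      rw [hQjc, if_neg (by omega), if_neg (Ne.symm hne), if_neg (by omega)]; ring
    · intro h; exact absurd (Finset.mem_Ico.mpr ⟨h1, h2⟩) h
  have hcoeff0 : Q.coeff 0
      = (1/((k:ℝ)-1)) * ∑ j ∈ Finset.Ico 1 k, Real.sin ((k-j:ℕ)*α)/Real.sin (j*α) * r^k := by
    rw [hQ, coeff_C_mul, finset_sum_coeff]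
    congr 1
    apply Finset.sum_congr rfl
    intro j hj
    simp only [Finset.mem_Ico] at hj
    rw [hQjc, if_neg (by omega), if_neg (by omega), if_pos rfl]; ring
  have hdegle : Q.natDegree ≤ k := by
    rw [hQ]
    refine le_trans (natDegree_C_mul_le _ _) ?_
    refine Polynomial.natDegree_sum_le_of_forall_le _ _ ?_
    intro j hj
    simp only [Finset.mem_Ico] at hj
    rw [hQj]
    compute_degree
    omega
  have hdeg : Q.natDegree = k :=
    le_antisymm hdegle (le_natDegree_of_ne_zero (by rw [hcoeffk]; norm_num))
  have hmonic : Q.Monic := monic_of_natDegree_le_of_coeff_eq_one k hdegle hcoeffk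
  -- positivity of coefficients
  have hpos : ∀ i ≤ k, 0 < Q.coeff i := by
    intro i hi
    rcases eq_or_lt_of_le hi with h | h
    · rw [h, hcoeffk]; norm_num
    · rcases Nat.eq_zero_or_pos i with h0 | h0
      · rw [h0, hcoeff0]
        apply mul_pos (by positivity)
        apply Finset.sum_pos
        · intro j hj
          simp only [Finset.mem_Ico] at hj
          have h1 : 0 < Real.sin ((k-j:ℕ)*α) := hsin (k-j) (by omega) (by omega)
          have h2 : 0 < Real.sin (j*α) := hsin j hj.1 hj.2
          positivity
        · exact ⟨1, Finset.mem_Ico.mpr ⟨le_refl 1, by omega⟩⟩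
      · rw [hcoeffmid i h0 h]
        have h2 : 0 < Real.sin (i*α) := hsin i h0 h
        have h3 : Real.sin (k*α)/Real.sin (i*α) * r^(k-i) < 0 :=
          mul_neg_of_neg_of_pos (div_neg_of_neg_of_pos hsk h2) (by positivity)
        have h4 : (0:ℝ) < 1/((k:ℝ)-1) := by positivity
        nlinarith
  -- root
  have hroot : ∀ j : ℕ, 1 ≤ j → j < k → Polynomial.aeval μ (Qj j) = 0 := by
    intro j h1 h2
    have hjle : j ≤ k := le_of_lt h2
    have hs : Real.sin (j * α) ≠ 0 := (hsin j h1 h2).ne'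
    have hexp : μ = (r:ℂ) * Complex.exp (α * Complex.I) := by
      rw [hμ, Complex.exp_mul_I]
    have hpow : ∀ n : ℕ,
        μ ^ n = (r:ℂ)^n * (↑(Real.cos (n*α)) + ↑(Real.sin (n*α)) * Complex.I) := by
      intro n
      rw [hexp, mul_pow, ← Complex.exp_nat_mul]
      have h : ((n:ℂ) * (↑α * Complex.I)) = (↑((n:ℝ)*α)) * Complex.I := by push_cast; ring
      rw [h, Complex.exp_mul_I, ← Complex.ofReal_cos, ← Complex.ofReal_sin]
    have hcast : ((k - j : ℕ):ℝ) = (k:ℝ) - j := by push_cast [hjle]; ring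
    have key1 : Real.sin (j*α) * Real.cos (k*α) - Real.sin (k*α) * Real.cos (j*α)
        + Real.sin ((k-j:ℕ)*α) = 0 := by
      rw [hcast, sub_mul, Real.sin_sub]; ring
    have hrC0 : ((r:ℂ)) ≠ 0 := by exact_mod_cast hr.ne'
    have hpw : (r:ℂ)^(k-j) = (r:ℂ)^k / (r:ℂ)^j := by
      rw [eq_div_iff (pow_ne_zero _ hrC0), ← pow_add]
      congr 1; omega
    rw [hQj]
    simp only [map_add, map_sub, map_mul, map_pow, aeval_X, aeval_C, Complex.coe_algebraMap]
    rw [hpow k, hpow j, hpw]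
    have hbC : (↑(Real.sin (j*α)) : ℂ) ≠ 0 := by exact_mod_cast hs
    have key1C : (↑(Real.sin (j*α)) * ↑(Real.cos (k*α)) - ↑(Real.sin (k*α)) * ↑(Real.cos (j*α))
        + ↑(Real.sin ((k-j:ℕ)*α)) : ℂ) = 0 := by exact_mod_cast key1
    push_cast [hjle] at key1C hbC ⊢
    linear_combination (norm := skip) ((r:ℂ))^k / Complex.sin ((j:ℂ) * (α:ℂ)) * key1C
    have hbC' : Complex.sin ((α:ℂ) * (j:ℂ)) ≠ 0 := by rw [mul_comm]; exact hbC
    field_simp [hbC, hbC', hrC0]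
    ring
  refine ⟨hmonic, hdeg, hpos, ?_⟩
  rw [hQ, map_mul, map_sum]
  rw [Finset.sum_eq_zero (fun j hj => by
    simp only [Finset.mem_Ico] at hj
    exact hroot j hj.1 hj.2), mul_zero]
end

section
/- Let n ≥ 1 and let μ = r(cos α + i sin α) be a complex number with r > 0 and α ∈ (−π, π]. If |α| ≥ π/n, then there exists a polynomial q of degree n with nonnegative real coefficients such that q(0) ≠ 0 and q(μ) = 0. -/
open Real Polynomial

set_option maxHeartbeats 1000000

private lemma coeff_mul_nonneg' {p q : Polynomial ℝ} (hp : ∀ i, 0 ≤ p.coeff i)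
    (hq : ∀ i, 0 ≤ q.coeff i) : ∀ i, 0 ≤ (p * q).coeff i := by
  intro i
  rw [Polynomial.coeff_mul]
  exact Finset.sum_nonneg fun x _ => mul_nonneg (hp _) (hq _)

private lemma coeff_pow_nonneg' {p : Polynomial ℝ} (hp : ∀ i, 0 ≤ p.coeff i) (k : ℕ) :
    ∀ i, 0 ≤ (p ^ k).coeff i := by
  induction k with
  | zero =>
    intro i
    rw [pow_zero, Polynomial.coeff_one]
    split_ifs <;> norm_num
  | succ k ih =>
    rw [pow_succ]
    exact coeff_mul_nonneg' ih hp

private lemma exp_pos_pow (α : ℝ) (k : ℕ) :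
    Complex.exp ((k * α : ℝ) * Complex.I) = Complex.exp ((α : ℝ) * Complex.I) ^ k := by
  rw [← Complex.exp_nat_mul]
  push_cast
  ring_nf

private lemma exp_neg_pow (α : ℝ) (k : ℕ) :
    Complex.exp (-((k * α : ℝ) : ℂ) * Complex.I) = Complex.exp (-((α : ℝ) : ℂ) * Complex.I) ^ k := by
  rw [← Complex.exp_nat_mul]
  push_cast
  ring_nf

private lemma aux_main (n : ℕ) (hn : 1 ≤ n) (r : ℝ) (hr : 0 < r) (α : ℝ)
    (hα1 : 0 < α) (hα2 : α ≤ π) (hαn : π / n ≤ α) :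
    ∃ q : Polynomial ℝ, q.natDegree = n ∧ (∀ i, 0 ≤ q.coeff i) ∧
      q.eval 0 ≠ 0 ∧ Polynomial.aeval ((r : ℂ) * Complex.exp ((α : ℝ) * Complex.I)) q = 0 := by
  set e : ℂ := Complex.exp ((α : ℝ) * Complex.I) with he
  set f : ℂ := Complex.exp (-((α : ℝ) : ℂ) * Complex.I) with hf
  have hef : e * f = 1 := by
    rw [he, hf, ← Complex.exp_add]
    simp
  have hπ : 0 < π := Real.pi_pos
  rcases eq_or_lt_of_le hn with h1 | hn2
  · -- n = 1, so α = π and μ = -r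
    have hn1 : n = 1 := h1.symm
    subst hn1
    have hαπ : α = π := by
      rw [Nat.cast_one, div_one] at hαn
      linarith
    refine ⟨X + C r, Polynomial.natDegree_X_add_C r, ?_, ?_, ?_⟩
    · intro i
      match i with
      | 0 => simp [hr.le]
      | 1 => simp
      | (k+2) => simp [Polynomial.coeff_X, Polynomial.coeff_C]
    · simp [hr.ne']
    · have : e = -1 := by rw [he, hαπ, Complex.exp_pi_mul_I]
      simp [this]
  · -- n ≥ 2
    have hn2' : 2 ≤ n := hn2
    set m : ℕ := ⌈π / (2 * α)⌉₊ with hm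
    have hfrac_pos : 0 < π / (2 * α) := by positivity
    have hm1 : 1 ≤ m := Nat.one_le_iff_ne_zero.mpr (by
      simp only [hm, ne_eq, Nat.ceil_eq_zero, not_le]
      exact hfrac_pos)
    have hmge : π / (2 * α) ≤ m := Nat.le_ceil _
    have hmlt : (m : ℝ) < π / (2 * α) + 1 := Nat.ceil_lt_add_one hfrac_pos.le
    have hmα_ge : π / 2 ≤ m * α := by
      rw [div_le_iff₀ (by positivity)] at hmge
      linarith
    have hmα_lt : (m : ℝ) * α < π / 2 + α := by
      have h' : (m : ℝ) - 1 < π / (2 * α) := by linarith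
      have h'' := (lt_div_iff₀ (by positivity : (0:ℝ) < 2 * α)).mp h'
      nlinarith [h'']
    have hcosm : Real.cos (m * α) ≤ 0 := by
      apply Real.cos_nonpos_of_pi_div_two_le_of_le hmα_ge
      linarith
    by_cases hA : 2 * m ≤ n
    · -- case A
      set c : ℝ := -(2 * r ^ m * Real.cos (m * α)) with hcdef
      have hc : 0 ≤ c := by
        have : 0 ≤ 2 * r ^ m := by positivity
        nlinarith
      set p1 : Polynomial ℝ := X ^ (2 * m) + (C c * X ^ m + C (r ^ (2 * m))) with hp1
      set p2 : Polynomial ℝ := (X + C r) ^ (n - 2 * m) with hp2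
      have hdlt : (C c * X ^ m + C (r ^ (2 * m))).degree < ((2 * m : ℕ) : WithBot ℕ) := by
        apply lt_of_le_of_lt (Polynomial.degree_add_le _ _)
        apply max_lt
        · exact lt_of_le_of_lt (Polynomial.degree_C_mul_X_pow_le _ _)
            (by exact_mod_cast by omega : ((m : ℕ) : WithBot ℕ) < ((2 * m : ℕ) : WithBot ℕ))
        · exact lt_of_le_of_lt (Polynomial.degree_C_le)
            (by exact_mod_cast by omega : ((0 : ℕ) : WithBot ℕ) < ((2 * m : ℕ) : WithBot ℕ))
      have hmonic1 : p1.Monic := Polynomial.monic_X_pow_add hdlt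
      have hdeg1 : p1.natDegree = 2 * m := by
        rw [hp1, Polynomial.natDegree_add_eq_left_of_degree_lt
          (by rwa [Polynomial.degree_X_pow]), Polynomial.natDegree_X_pow]
      have hmonic2 : p2.Monic := (Polynomial.monic_X_add_C r).pow _
      have hdeg2 : p2.natDegree = n - 2 * m := by
        rw [hp2, Polynomial.natDegree_pow, Polynomial.natDegree_X_add_C, mul_one]
      refine ⟨p1 * p2, ?_, ?_, ?_, ?_⟩
      · rw [hmonic1.natDegree_mul hmonic2, hdeg1, hdeg2]
        omega
      · apply coeff_mul_nonneg'
        · intro i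
          simp only [hp1, Polynomial.coeff_add, Polynomial.coeff_X_pow,
            Polynomial.coeff_C_mul, Polynomial.coeff_C]
          have hrm : (0:ℝ) ≤ r ^ (2 * m) := by positivity
          split_ifs <;> simp <;> linarith
        · apply coeff_pow_nonneg'
          intro i
          match i with
          | 0 => simp [hr.le]
          | 1 => simp
          | (k+2) => simp [Polynomial.coeff_X, Polynomial.coeff_C]
      · have h2m : 2 * m ≠ 0 := by omega
        have hm0 : m ≠ 0 := by omega
        simp only [hp1, hp2, Polynomial.eval_mul, Polynomial.eval_add, Polynomial.eval_pow,
          Polynomial.eval_X, Polynomial.eval_C, zero_pow h2m, zero_pow hm0, mul_zero, zero_add,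
          add_zero]
        positivity
      · rw [map_mul]
        have hz : Polynomial.aeval ((r : ℂ) * e) p1 = 0 := by
          simp only [hp1, map_add, map_mul, map_pow, Polynomial.aeval_X, Polynomial.aeval_C]
          have hcos : (Complex.cos ((m * α : ℝ) : ℂ)) = (e ^ m + f ^ m) / 2 := by
            rw [Complex.cos, exp_pos_pow, exp_neg_pow, ← he, ← hf]
          have hcast : (algebraMap ℝ ℂ) c = -(2 * (r:ℂ) ^ m * ((e ^ m + f ^ m) / 2)) := by
            rw [Complex.coe_algebraMap, hcdef, Complex.ofReal_neg, Complex.ofReal_mul,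
              Complex.ofReal_mul, Complex.ofReal_pow, Complex.ofReal_cos, hcos]
            norm_num
          rw [hcast]
          have hfem : f ^ m * e ^ m = 1 := by
            rw [← mul_pow, mul_comm f e, hef, one_pow]
          rw [Complex.coe_algebraMap]
          linear_combination (-((r:ℂ) ^ (2 * m))) * hfem
        rw [hz, zero_mul]
    · -- case B
      push_neg at hA
      have hm2 : 2 ≤ m := by omega
      have hαhalf : α < π / 2 := by
        have h1m : (1 : ℝ) < π / (2 * α) := by
          have := Nat.lt_ceil.mp (show 1 < m by omega)
          exact_mod_cast this
        have := (lt_div_iff₀ (by positivity : (0:ℝ) < 2 * α)).mp h1m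
        linarith
      set j : ℕ := n - 1 with hjdef
      have hjn : n = j + 1 := by omega
      have hj1 : 1 ≤ j := by omega
      have hjcast : (j : ℝ) = (n : ℝ) - 1 := by
        rw [hjdef]; push_cast [Nat.cast_sub hn]; ring
      have hnα_ge : π ≤ n * α := by
        rw [div_le_iff₀ (by positivity : (0:ℝ) < (n:ℝ))] at hαn
        linarith
      have hjα_lt : (j : ℝ) * α < π := by
        have hmm : ((m : ℝ) - 1) * (2 * α) < π := by
          have h' : (m : ℝ) - 1 < π / (2 * α) := by linarith
          exact (lt_div_iff₀ (by positivity : (0:ℝ) < 2 * α)).mp h'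
        have hjm : (j : ℝ) ≤ 2 * ((m : ℝ) - 1) := by
          have h : (j : ℝ) ≤ ((2 * (m - 1) : ℕ) : ℝ) := Nat.cast_le.mpr (by omega)
          rw [Nat.cast_mul, Nat.cast_sub hm1] at h
          norm_num at h
          linarith
        nlinarith [hα1]
      have hs1 : 0 < Real.sin (j * α) := by
        apply Real.sin_pos_of_pos_of_lt_pi
        · have : (1:ℝ) ≤ (j:ℝ) := by exact_mod_cast hj1
          nlinarith
        · exact hjα_lt
      have hs3 : 0 < Real.sin α := Real.sin_pos_of_pos_of_lt_pi hα1 (by linarith)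
      have hs2 : Real.sin (n * α) ≤ 0 := by
        have hsub : Real.sin ((n : ℝ) * α - π) = -Real.sin (n * α) := by
          rw [Real.sin_sub_pi]
        have hge : 0 ≤ (n : ℝ) * α - π := by linarith
        have hle : (n : ℝ) * α - π ≤ π := by
          have : (n : ℝ) * α = (j : ℝ) * α + α := by rw [hjcast]; ring
          linarith
        have := Real.sin_nonneg_of_nonneg_of_le_pi hge hle
        linarith [hsub ▸ this]
      set a : ℝ := Real.sin (j * α) with hadef
      set b : ℝ := -Real.sin (n * α) * r with hbdef
      set c : ℝ := Real.sin α * r ^ n with hcdef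
      have hb : 0 ≤ b := by
        rw [hbdef]
        exact mul_nonneg (by linarith) hr.le
      have hcpos : 0 < c := by rw [hcdef]; positivity
      refine ⟨C a * X ^ n + (C b * X ^ j + C c), ?_, ?_, ?_, ?_⟩
      · rw [Polynomial.natDegree_add_eq_left_of_natDegree_lt, Polynomial.natDegree_C_mul_X_pow _ _ hs1.ne']
        rw [Polynomial.natDegree_C_mul_X_pow _ _ hs1.ne']
        calc (C b * X ^ j + C c).natDegree ≤ max (C b * X ^ j).natDegree (C c).natDegree :=
              Polynomial.natDegree_add_le _ _
          _ < n := by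
              apply max_lt
              · exact lt_of_le_of_lt (Polynomial.natDegree_C_mul_le _ _)
                  (by rw [Polynomial.natDegree_X_pow]; omega)
              · rw [Polynomial.natDegree_C]; omega
      · intro i
        simp only [Polynomial.coeff_add, Polynomial.coeff_C_mul, Polynomial.coeff_X_pow,
          Polynomial.coeff_C]
        split_ifs <;> simp <;> first
          | linarith [hs1.le, hb, hcpos.le]
          | nlinarith [hs1.le, hb, hcpos.le]
      · have hn0 : n ≠ 0 := by omega
        have hj0 : j ≠ 0 := by omega
        simp only [Polynomial.eval_add, Polynomial.eval_mul, Polynomial.eval_pow,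
          Polynomial.eval_X, Polynomial.eval_C, zero_pow hn0, zero_pow hj0, mul_zero, zero_add]
        exact hcpos.ne'
      · simp only [map_add, map_mul, map_pow, Polynomial.aeval_X, Polynomial.aeval_C,
          Complex.coe_algebraMap]
        have hsinj : ((a : ℝ) : ℂ) = (f ^ j - e ^ j) * Complex.I / 2 := by
          rw [hadef, Complex.ofReal_sin, Complex.sin, exp_pos_pow, exp_neg_pow, ← he, ← hf]
        have hsinn : ((Real.sin ((n:ℝ) * α) : ℝ) : ℂ) = (f ^ n - e ^ n) * Complex.I / 2 := by
          rw [Complex.ofReal_sin]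
          rw [show ((n:ℝ) * α : ℝ) = ((n:ℕ) * α : ℝ) by push_cast; ring]
          rw [Complex.sin, exp_pos_pow, exp_neg_pow, ← he, ← hf]
        have hsin1 : ((Real.sin α : ℝ) : ℂ) = (f - e) * Complex.I / 2 := by
          rw [Complex.ofReal_sin, Complex.sin, he, hf]
        have hfej : f ^ j * e ^ j = 1 := by
          rw [← mul_pow, mul_comm f e, hef, one_pow]
        rw [hbdef, hcdef]
        push_cast [hsinj, hsinn, hsin1]
        rw [hjn]
        linear_combination (Complex.I / 2 * ((r:ℂ) ^ (j+1)) * (e - f)) * hfej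

theorem stmt_5 (n : ℕ) (hn : 1 ≤ n) (r : ℝ) (hr : 0 < r) (α : ℝ)
    (hα : α ∈ Set.Ioc (-π) π) (hαn : π / n ≤ |α|)
    (μ : ℂ) (hμ : μ = (r : ℂ) * (Complex.cos α + Complex.sin α * Complex.I)) :
    ∃ q : Polynomial ℝ, q.natDegree = n ∧ (∀ i, 0 ≤ q.coeff i) ∧
      q.eval 0 ≠ 0 ∧ Polynomial.aeval μ q = 0 := by
  have hπ : 0 < π := Real.pi_pos
  have hμ' : μ = (r : ℂ) * Complex.exp ((α : ℝ) * Complex.I) := by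
    rw [hμ, Complex.exp_mul_I]
  have hαne : α ≠ 0 := by
    intro h
    rw [h] at hαn
    simp at hαn
    have : 0 < π / n := by positivity
    linarith
  rcases lt_or_gt_of_ne hαne with hneg | hpos
  · -- α < 0 : use -α and conjugate
    have h1 : 0 < -α := by linarith
    have h2 : -α ≤ π := by linarith [hα.1]
    have h3 : π / n ≤ -α := by rwa [abs_of_neg hneg] at hαn
    obtain ⟨q, hdeg, hcoeff, hev, hroot⟩ := aux_main n hn r hr (-α) h1 h2 h3
    refine ⟨q, hdeg, hcoeff, hev, ?_⟩
    have hroot' : Polynomial.aeval ((r:ℂ) * Complex.exp (-((α:ℝ) * Complex.I))) q = 0 := by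
      convert hroot using 3
      push_cast; ring
    have key := Polynomial.aeval_algHom_apply (Complex.conjAe.toAlgHom)
      ((r : ℂ) * Complex.exp (-((α:ℝ) * Complex.I))) q
    rw [hroot'] at key
    have himg : (Complex.conjAe) ((r:ℂ) * Complex.exp (-((α:ℝ) * Complex.I)))
        = (r:ℂ) * Complex.exp ((α:ℝ) * Complex.I) := by
      have hce : (starRingEnd ℂ) (Complex.exp (-((α:ℝ) * Complex.I)))
          = Complex.exp ((α:ℝ) * Complex.I) := by
        rw [← Complex.exp_conj, map_neg, map_mul, Complex.conj_I, Complex.conj_ofReal]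
        ring_nf
      simpa using congrArg (fun z => (r:ℂ) * z) hce
    rw [hμ']
    change Polynomial.aeval (Complex.conjAe _) q = Complex.conjAe 0 at key
    rw [himg] at key
    simpa using key
  · obtain ⟨q, hdeg, hcoeff, hev, hroot⟩ := aux_main n hn r hr α hpos hα.2
      (by rwa [abs_of_pos hpos] at hαn)
    exact ⟨q, hdeg, hcoeff, hev, by rwa [hμ']⟩
end

section
/- Let n ≥ 2 and let μ = r(cos α + i sin α) be a complex number with r > 0 and α ∈ (−π, π]. If |α| ≥ π/n and π/α is not an integer, then there exists a polynomial q of degree n with strictly positive real coefficients such that q(μ) = 0. -/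
open Real

lemma comb (c1 c2 γ θ : ℝ) (h1 : 1 + c1 * Real.cos γ + c2 * Real.cos θ = 0)
    (h2 : c1 * Real.sin γ + c2 * Real.sin θ = 0) :
    (1:ℂ) + (c1:ℂ) * Complex.exp ((γ:ℂ) * Complex.I) + (c2:ℂ) * Complex.exp ((θ:ℂ) * Complex.I) = 0 := by
  rw [Complex.ext_iff]
  constructor
  · simpa [Complex.exp_ofReal_mul_I_re, Complex.exp_ofReal_mul_I_im] using h1
  · simpa [Complex.exp_ofReal_mul_I_re, Complex.exp_ofReal_mul_I_im] using h2

lemma comb2 (A B γ : ℝ) (z : ℂ) (h1 : A + B * Real.cos γ = z.re) (h2 : B * Real.sin γ = z.im) :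
    (A:ℂ) + (B:ℂ) * Complex.exp ((γ:ℂ) * Complex.I) = z := by
  rw [Complex.ext_iff]
  constructor
  · simpa [Complex.exp_ofReal_mul_I_re, Complex.exp_ofReal_mul_I_im] using h1
  · simpa [Complex.exp_ofReal_mul_I_re, Complex.exp_ofReal_mul_I_im] using h2

lemma key (n m : ℕ) (β : ℝ) (hm1 : 1 ≤ m) (hmn : m + 1 ≤ n)
    (hβ0 : 0 < β) (hβπ : β < π) (h2 : m * β < π) (h3 : π < (m + 1) * β) :
    ∃ a : ℕ → ℝ, (∀ k ≤ n, 0 < a k) ∧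
      ∑ k ∈ Finset.range (n+1), (a k : ℂ) * Complex.exp (((k : ℝ) * β : ℂ) * Complex.I) = 0 := by
  have hsβ : 0 < Real.sin β := Real.sin_pos_of_pos_of_lt_pi hβ0 hβπ
  have hsm : 0 < Real.sin (m * β) := by
    apply Real.sin_pos_of_pos_of_lt_pi _ h2
    have : (1:ℝ) ≤ m := by exact_mod_cast hm1
    nlinarith
  have h3' : π < ((m:ℝ) + 1) * β := by push_cast at h3 ⊢; linarith
  have hθ2 : ((m:ℝ) + 1) * β < 2 * π := by nlinarith
  have hsθ : Real.sin (((m:ℝ) + 1) * β) < 0 := by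
    have := Real.sin_pos_of_pos_of_lt_pi (x := ((m:ℝ)+1)*β - π) (by linarith) (by linarith)
    rw [Real.sin_sub_pi] at this; linarith
  set p : ℝ := -Real.sin (((m:ℝ)+1) * β) / Real.sin (m * β) with hp_def
  set q : ℝ := Real.sin β / Real.sin (m * β) with hq_def
  have hp : 0 < p := div_pos (by linarith) hsm
  have hq : 0 < q := div_pos hsβ hsm
  have hrel : (1:ℂ) + (p:ℂ) * Complex.exp ((β:ℂ) * Complex.I)
      + (q:ℂ) * Complex.exp (((((m:ℝ)+1)*β : ℝ) : ℂ) * Complex.I) = 0 := by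
    apply comb
    · have h := Real.sin_sub (((m:ℝ)+1)*β) β
      rw [show ((m:ℝ)+1)*β - β = (m:ℝ)*β by ring] at h
      rw [hp_def, hq_def]
      field_simp
      linear_combination h
    · rw [hp_def, hq_def]
      field_simp
      ring
  set S : ℂ := ∑ k ∈ Finset.range (n+1), Complex.exp (((k : ℝ) * β : ℂ) * Complex.I) with hS_def
  set B0 : ℝ := -S.im / Real.sin β with hB0_def
  set A0 : ℝ := -S.re - B0 * Real.cos β with hA0_def
  have hAB : (A0:ℂ) + (B0:ℂ) * Complex.exp ((β:ℂ) * Complex.I) = -S := by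
    apply comb2
    · simp only [hA0_def, Complex.neg_re]; ring
    · simp only [hB0_def, Complex.neg_im]
      rw [div_mul_cancel₀ _ hsβ.ne']
  set t : ℝ := |A0| + |B0| / p with ht_def
  have ht0 : 0 ≤ t := by positivity
  set a : ℕ → ℝ := fun k => if k = 0 then 1 + A0 + t else if k = 1 then 1 + B0 + t * p
    else if k = m + 1 then 1 + t * q else 1 with ha_def
  have ha0 : a 0 = 1 + A0 + t := by simp [ha_def]
  have ha1 : a 1 = 1 + B0 + t * p := by simp [ha_def]
  have ham : a (m+1) = 1 + t * q := by
    have h1 : m + 1 ≠ 0 := by omega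
    have h2 : m + 1 ≠ 1 := by omega
    simp [ha_def, h1, h2, show m ≠ 0 by omega]
  refine ⟨a, ?_, ?_⟩
  · intro k _
    by_cases h0 : k = 0
    · rw [h0, ha0]
      have : |A0| + A0 ≥ 0 := by cases abs_cases A0 <;> linarith
      have h1 : 0 ≤ |B0| / p := by positivity
      rw [ht_def]; linarith
    by_cases h1 : k = 1
    · rw [h1, ha1]
      have htp : t * p = |A0| * p + |B0| := by rw [ht_def]; field_simp
      have hb : |B0| + B0 ≥ 0 := by cases abs_cases B0 <;> linarith
      have h3 : 0 ≤ |A0| * p := by positivity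
      rw [htp]; linarith
    by_cases h2 : k = m + 1
    · rw [h2, ham]; nlinarith
    · simp [ha_def, h0, h1, h2]
  · have split : ∀ k ∈ Finset.range (n+1), (a k : ℂ) * Complex.exp (((k : ℝ) * β : ℂ) * Complex.I)
        = Complex.exp (((k : ℝ) * β : ℂ) * Complex.I)
          + ((a k - 1 : ℝ) : ℂ) * Complex.exp (((k : ℝ) * β : ℂ) * Complex.I) := by
      intro k _; push_cast; ring
    rw [Finset.sum_congr rfl split, Finset.sum_add_distrib, ← hS_def]
    have hsub : ({0, 1, m+1} : Finset ℕ) ⊆ Finset.range (n+1) := by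
      intro x hx
      simp only [Finset.mem_insert, Finset.mem_singleton] at hx
      rcases hx with rfl | rfl | rfl <;> simp [Finset.mem_range] <;> omega
    have hzero : ∀ x ∈ Finset.range (n+1), x ∉ ({0, 1, m+1} : Finset ℕ) →
        ((a x - 1 : ℝ) : ℂ) * Complex.exp (((x : ℝ) * β : ℂ) * Complex.I) = 0 := by
      intro x _ hx
      simp only [Finset.mem_insert, Finset.mem_singleton, not_or] at hx
      obtain ⟨hx0, hx1, hxm⟩ := hx
      simp [ha_def, hx0, hx1, hxm]
    rw [← Finset.sum_subset hsub hzero]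
    have h01 : (0:ℕ) ∉ ({1, m+1} : Finset ℕ) := by
      simp only [Finset.mem_insert, Finset.mem_singleton]; omega
    have h1m : (1:ℕ) ∉ ({m+1} : Finset ℕ) := by
      simp only [Finset.mem_singleton]; omega
    rw [show ({0, 1, m+1} : Finset ℕ) = insert 0 (insert 1 {m+1}) from rfl,
      Finset.sum_insert h01, Finset.sum_insert h1m, Finset.sum_singleton]
    rw [ha0, ha1, ham]
    have e0 : ((((0:ℕ):ℝ)):ℂ) * (β:ℂ) * Complex.I = 0 := by norm_num
    have e1 : ((((1:ℕ):ℝ)):ℂ) * (β:ℂ) * Complex.I = (β:ℂ) * Complex.I := by norm_num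
    have e2 : ((((m+1:ℕ):ℝ)):ℂ) * (β:ℂ) * Complex.I = ((((m:ℝ)+1)*β : ℝ) : ℂ) * Complex.I := by
      push_cast; ring
    rw [e0, e1, e2, Complex.exp_zero]
    push_cast at hrel hAB ⊢
    linear_combination hAB + (t:ℂ) * hrel

theorem stmt_6 (n : ℕ) (hn : 2 ≤ n) (r : ℝ) (hr : 0 < r) (α : ℝ)
    (hα : α ∈ Set.Ioc (-π) π) (hαn : π / n ≤ |α|)
    (hint : ¬ ∃ m : ℤ, π / α = (m : ℝ))
    (μ : ℂ) (hμ : μ = (r : ℂ) * (Complex.cos α + Complex.sin α * Complex.I)) :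
    ∃ q : Polynomial ℝ, q.natDegree = n ∧ (∀ i ≤ n, 0 < q.coeff i) ∧
      Polynomial.aeval μ q = 0 := by
  obtain ⟨hα1, hα2⟩ := hα
  have hn0 : (0:ℝ) < n := by positivity
  set β : ℝ := |α| with hβ_def
  have hβ0 : 0 < β := lt_of_lt_of_le (by positivity) hαn
  have hα0 : α ≠ 0 := by
    intro h; rw [hβ_def, h] at hβ0; simp at hβ0
  have hβle : β ≤ π := abs_le.2 ⟨by linarith, hα2⟩
  have hnotint : ∀ z : ℤ, π / β ≠ (z : ℝ) := by
    intro z h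
    apply hint
    rcases abs_cases α with ⟨he, _⟩ | ⟨he, _⟩
    · exact ⟨z, by rw [hβ_def, he] at h; exact h⟩
    · refine ⟨-z, ?_⟩
      rw [hβ_def, he] at h
      push_cast
      rw [div_neg] at h
      linarith
  have hβπ : β < π := by
    rcases lt_or_eq_of_le hβle with h | h
    · exact h
    · exact absurd (by rw [h, div_self pi_ne_zero]; norm_num : π / β = ((1:ℤ):ℝ)) (hnotint 1)
  have hx1 : 1 < π / β := (one_lt_div hβ0).2 hβπ
  have hxn : π / β ≤ n := by
    rw [div_le_iff₀ hβ0]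
    rw [div_le_iff₀ hn0] at hαn
    linarith
  have hxn' : π / β < n := lt_of_le_of_ne hxn (by exact_mod_cast hnotint n)
  set m : ℕ := ⌊π / β⌋₊ with hm_def
  have hmle : (m : ℝ) ≤ π / β := Nat.floor_le (by positivity)
  have hmlt : (m : ℝ) < π / β := by
    refine lt_of_le_of_ne hmle fun h => hnotint m ?_
    exact_mod_cast h.symm
  have hltm : π / β < m + 1 := Nat.lt_floor_add_one _
  have hm1 : 1 ≤ m := by
    rw [hm_def]
    exact Nat.le_floor (by exact_mod_cast hx1.le)
  have hmn : m + 1 ≤ n := by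
    have : (m:ℝ) < n := lt_of_le_of_lt hmle hxn'
    exact_mod_cast Nat.succ_le_of_lt (by exact_mod_cast this)
  have h2 : (m:ℝ) * β < π := by
    rw [lt_div_iff₀ hβ0] at hmlt
    linarith
  have h3 : π < ((m:ℕ) + 1 : ℕ) * β := by
    push_cast
    rw [div_lt_iff₀ hβ0] at hltm
    linarith
  obtain ⟨a, hapos, hasum⟩ := key n m β hm1 hmn hβ0 hβπ (by exact_mod_cast h2) (by exact_mod_cast h3)
  set c : ℕ → ℝ := fun k => a k / r ^ k with hc_def
  have hrk : ∀ k : ℕ, (0:ℝ) < r ^ k := fun k => pow_pos hr k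
  have hcoeff : ∀ i, i ≤ n → (∑ k ∈ Finset.range (n+1), Polynomial.monomial k (c k)).coeff i = c i := by
    intro i hi
    rw [Polynomial.finset_sum_coeff]
    rw [Finset.sum_eq_single i]
    · simp [Polynomial.coeff_monomial]
    · intro b _ hb
      simp [Polynomial.coeff_monomial, hb]
    · intro h
      exact absurd (Finset.mem_range.2 (by omega)) h
  refine ⟨∑ k ∈ Finset.range (n+1), Polynomial.monomial k (c k), ?_, ?_, ?_⟩
  · apply le_antisymm
    · apply Polynomial.natDegree_sum_le_of_forall_le
      intro k hk
      exact le_trans (Polynomial.natDegree_monomial_le _) (by simp at hk; omega)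
    · apply Polynomial.le_natDegree_of_ne_zero
      rw [hcoeff n le_rfl]
      have := hapos n le_rfl
      have := hrk n
      positivity
  · intro i hi
    rw [hcoeff i hi]
    have := hapos i hi
    have := hrk i
    positivity
  · rw [map_sum]
    have hμ' : μ = (r:ℂ) * Complex.exp ((α:ℂ) * Complex.I) := by
      rw [hμ, Complex.exp_mul_I]
    have hterm : ∀ k : ℕ, (Polynomial.aeval μ) (Polynomial.monomial k (c k))
        = (a k : ℂ) * Complex.exp (((k:ℝ) * α : ℂ) * Complex.I) := by
      intro k
      rw [Polynomial.aeval_monomial, hμ']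
      rw [mul_pow, ← Complex.exp_nat_mul]
      have hral : algebraMap ℝ ℂ (c k) = ((c k : ℝ) : ℂ) := rfl
      rw [hral, hc_def]
      push_cast
      have hrkC : ((r:ℂ)) ^ k ≠ 0 := by exact_mod_cast (hrk k).ne'
      field_simp
    rw [Finset.sum_congr rfl fun k _ => hterm k]
    rcases abs_cases α with ⟨he, _⟩ | ⟨he, _⟩
    · rw [hβ_def, he] at hasum
      exact hasum
    · have hconj : ∀ k : ℕ, Complex.exp (((k:ℝ) * α : ℂ) * Complex.I)
          = (starRingEnd ℂ) (Complex.exp (((k:ℝ) * β : ℂ) * Complex.I)) := by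
        intro k
        rw [← Complex.exp_conj]
        congr 1
        rw [hβ_def, he]
        simp only [map_mul, Complex.conj_ofReal, Complex.conj_I]
        push_cast
        ring
      calc ∑ k ∈ Finset.range (n+1), (a k : ℂ) * Complex.exp (((k:ℝ) * α : ℂ) * Complex.I)
          = (starRingEnd ℂ) (∑ k ∈ Finset.range (n+1), (a k : ℂ) * Complex.exp (((k:ℝ) * β : ℂ) * Complex.I)) := by
            rw [map_sum]
            refine Finset.sum_congr rfl fun k _ => ?_
            rw [map_mul, Complex.conj_ofReal, hconj k]
        _ = 0 := by rw [hasum]; simp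
end

section
/- Let q be a polynomial of degree n ≥ 1 with nonnegative real coefficients, q(0) ≠ 0, and suppose q(μ) = 0 for μ = r(cos α + i sin α), r > 0, α ∈ (−π, π]. Then |α| ≥ π/n. -/
open Real Polynomial

theorem stmt_15 (n : ℕ) (hn : 1 ≤ n) (q : Polynomial ℝ) (hdeg : q.natDegree = n)
    (hcoeff : ∀ i, 0 ≤ q.coeff i) (h0 : q.eval 0 ≠ 0)
    (r : ℝ) (hr : 0 < r) (α : ℝ) (hα : α ∈ Set.Ioc (-π) π)
    (μ : ℂ) (hμ : μ = (r : ℂ) * (Complex.cos α + Complex.sin α * Complex.I))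
    (hroot : Polynomial.aeval μ q = 0) :
    π / n ≤ |α| := by
  by_contra hcon
  push_neg at hcon
  have hnpos : (0:ℝ) < n := by exact_mod_cast hn
  have hq0 : 0 < q.coeff 0 := by
    refine (hcoeff 0).lt_of_ne fun h => h0 ?_
    rw [← Polynomial.coeff_zero_eq_eval_zero, ← h]
  have hqne : q ≠ 0 := fun h => h0 (by simp [h])
  have hqn : 0 < q.coeff n := by
    refine (hcoeff n).lt_of_ne fun h => ?_
    have := Polynomial.leadingCoeff_ne_zero.mpr hqne
    rw [Polynomial.leadingCoeff, hdeg] at this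
    exact this h.symm
  have hkey : (Polynomial.aeval μ q).im
      = ∑ i ∈ Finset.range (n+1), q.coeff i * (r^i * Real.sin (i*α)) := by
    rw [Polynomial.aeval_eq_sum_range, hdeg, Complex.im_sum]
    refine Finset.sum_congr rfl fun i hi => ?_
    have hpow : μ ^ i = ((r^i : ℝ) : ℂ) * Complex.exp (((i*α : ℝ)) * Complex.I) := by
      rw [hμ, ← Complex.exp_mul_I, mul_pow, ← Complex.exp_nat_mul]
      congr 1
      · push_cast; ring
      · push_cast; ring
    rw [Complex.real_smul, hpow]
    simp only [Complex.mul_im, Complex.mul_re, Complex.exp_ofReal_mul_I_im,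
      Complex.exp_ofReal_mul_I_re, Complex.ofReal_re, Complex.ofReal_im]
    ring
  rw [hroot] at hkey
  simp only [Complex.zero_im] at hkey
  rcases lt_trichotomy α 0 with hα0 | hα0 | hα0
  · -- α < 0
    have habs : -α < π / n := by rw [abs_of_neg hα0] at hcon; linarith
    have hnα : -π < (n:ℝ) * α := by
      have := (mul_lt_mul_of_pos_left habs hnpos)
      rw [mul_div_cancel₀ _ hnpos.ne'] at this
      linarith
    have hterms : ∀ i ∈ Finset.range (n+1), q.coeff i * (r^i * Real.sin (i*α)) ≤ 0 := by
      intro i hi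
      have hi' : (i:ℝ) ≤ n := by exact_mod_cast Nat.lt_succ_iff.mp (Finset.mem_range.mp hi)
      have h1 : (i:ℝ) * α ≤ 0 := mul_nonpos_of_nonneg_of_nonpos (Nat.cast_nonneg i) hα0.le
      have h2 : -π ≤ (i:ℝ) * α := by nlinarith
      have := Real.sin_nonpos_of_nonpos_of_neg_pi_le h1 h2
      have := mul_nonneg (hcoeff i) (pow_nonneg hr.le i)
      nlinarith
    have h0' := (Finset.sum_eq_zero_iff_of_nonpos hterms).mp hkey.symm n (by simp)
    have hsin : Real.sin ((n:ℝ)*α) < 0 := by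
      apply Real.sin_neg_of_neg_of_neg_pi_lt
      · exact mul_neg_of_pos_of_neg hnpos hα0
      · exact hnα
    have : q.coeff n * (r ^ n * Real.sin ((n:ℝ)*α)) < 0 :=
      mul_neg_of_pos_of_neg hqn (mul_neg_of_pos_of_neg (pow_pos hr n) hsin)
    linarith
  · -- α = 0
    subst hα0
    have hμ' : μ = ((r:ℝ) : ℂ) := by simp [hμ]
    rw [hμ'] at hroot
    have : Polynomial.aeval ((r:ℝ):ℂ) q = ((q.eval r : ℝ) : ℂ) := by
      rw [show ((r:ℝ):ℂ) = algebraMap ℝ ℂ r from rfl, Polynomial.aeval_algebraMap_apply]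
      simp
    rw [this] at hroot
    have hev : q.eval r = 0 := by exact_mod_cast hroot
    have : (0:ℝ) < q.eval r := by
      rw [Polynomial.eval_eq_sum_range]
      refine Finset.sum_pos' (fun i _ => mul_nonneg (hcoeff i) (pow_nonneg hr.le i)) ⟨0, by simp, ?_⟩
      simpa using hq0
    linarith
  · -- α > 0
    have habs : α < π / n := by rw [abs_of_pos hα0] at hcon; linarith
    have hnα : (n:ℝ) * α < π := by
      have := mul_lt_mul_of_pos_left habs hnpos
      rwa [mul_div_cancel₀ _ hnpos.ne'] at this
    have hterms : ∀ i ∈ Finset.range (n+1), 0 ≤ q.coeff i * (r^i * Real.sin (i*α)) := by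
      intro i hi
      have hi' : (i:ℝ) ≤ n := by exact_mod_cast Nat.lt_succ_iff.mp (Finset.mem_range.mp hi)
      have h1 : 0 ≤ (i:ℝ) * α := mul_nonneg (Nat.cast_nonneg i) hα0.le
      have h2 : (i:ℝ) * α ≤ π := by nlinarith
      have := Real.sin_nonneg_of_nonneg_of_le_pi h1 h2
      have := mul_nonneg (hcoeff i) (pow_nonneg hr.le i)
      nlinarith
    have h0' := (Finset.sum_eq_zero_iff_of_nonneg hterms).mp hkey.symm n (by simp)
    have hsin : 0 < Real.sin ((n:ℝ)*α) := by
      apply Real.sin_pos_of_pos_of_lt_pi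
      · exact mul_pos hnpos hα0
      · exact hnα
    have : 0 < q.coeff n * (r ^ n * Real.sin ((n:ℝ)*α)) :=
      mul_pos hqn (mul_pos (pow_pos hr n) hsin)
    linarith
end

section
/- Let q be a polynomial of degree n ≥ 1 with nonnegative real coefficients, q(0) ≠ 0, q(μ) = 0 for μ = r(cos α + i sin α) with r > 0 and α ∈ (−π, π], and suppose |α| = π/n. Then q(t) = a_n t^n + a_0 for some a_n, a_0 > 0 (all intermediate coefficients vanish). -/
open Real Polynomial

theorem stmt_16 (n : ℕ) (hn : 1 ≤ n) (q : Polynomial ℝ) (hdeg : q.natDegree = n)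
    (hcoeff : ∀ i, 0 ≤ q.coeff i) (h0 : q.eval 0 ≠ 0)
    (r : ℝ) (hr : 0 < r) (α : ℝ) (hα : α ∈ Set.Ioc (-π) π)
    (μ : ℂ) (hμ : μ = (r : ℂ) * (Complex.cos α + Complex.sin α * Complex.I))
    (hroot : Polynomial.aeval μ q = 0) (heq : |α| = π / n) :
    ∃ an a0 : ℝ, 0 < an ∧ 0 < a0 ∧ q = C an * X ^ n + C a0 := by
  have hnpos : (0:ℝ) < n := by exact_mod_cast hn
  have hπn : 0 < π / n := by positivity
  -- imaginary part of q(μ)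
  have hterm : ∀ i : ℕ, ((q.coeff i : ℂ) * μ ^ i).im
      = q.coeff i * r ^ i * Real.sin (i * α) := by
    intro i
    have hμ' : μ = (r : ℂ) * Complex.exp (α * Complex.I) := by
      rw [hμ, Complex.exp_mul_I]
    have hcast : (i : ℂ) * ((α : ℂ) * Complex.I) = ((i * α : ℝ) : ℂ) * Complex.I := by
      push_cast; ring
    rw [hμ', mul_pow, ← Complex.exp_nat_mul, hcast, ← Complex.ofReal_pow]
    simp only [Complex.mul_im, Complex.mul_re, Complex.ofReal_re, Complex.ofReal_im,
      Complex.exp_ofReal_mul_I_im, Complex.exp_ofReal_mul_I_re, zero_mul, mul_zero,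
      add_zero, zero_add, sub_zero]
    push_cast
    ring
  have him : ∑ i ∈ Finset.range (n + 1), q.coeff i * r ^ i * Real.sin (i * α) = 0 := by
    have : (Polynomial.aeval μ q).im = 0 := by rw [hroot]; rfl
    rw [Polynomial.aeval_def, Polynomial.eval₂_eq_sum_range, hdeg] at this
    rw [← this, Complex.im_sum]
    exact Finset.sum_congr rfl fun i _ => (hterm i).symm
  -- the unified nonnegative sum
  have key : ∑ i ∈ Finset.range (n + 1), q.coeff i * r ^ i * Real.sin (i * (π / n)) = 0 := by
    rcases (abs_eq hπn.le).mp heq with h | h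
    · rw [← h]; exact him
    · have : ∑ i ∈ Finset.range (n + 1), q.coeff i * r ^ i * Real.sin (i * (π / n))
          = -∑ i ∈ Finset.range (n + 1), q.coeff i * r ^ i * Real.sin (i * α) := by
        rw [← Finset.sum_neg_distrib]
        refine Finset.sum_congr rfl fun i _ => ?_
        rw [h]
        have : (i : ℝ) * -(π / n) = -(i * (π / n)) := by ring
        rw [this, Real.sin_neg]; ring
      rw [this, him, neg_zero]
  have hnonneg : ∀ i ∈ Finset.range (n + 1),
      0 ≤ q.coeff i * r ^ i * Real.sin (i * (π / n)) := by
    intro i hi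
    have hi' : i ≤ n := by simpa [Nat.lt_succ_iff] using hi
    have h1 : 0 ≤ (i : ℝ) * (π / n) := by positivity
    have h2 : (i : ℝ) * (π / n) ≤ π := by
      have hle : (i : ℝ) ≤ n := by exact_mod_cast hi'
      calc (i:ℝ) * (π / n) ≤ n * (π / n) := by gcongr
        _ = π := by field_simp
    have hs := Real.sin_nonneg_of_nonneg_of_le_pi h1 h2
    exact mul_nonneg (mul_nonneg (hcoeff i) (by positivity)) hs
  have hzero : ∀ i, 0 < i → i < n → q.coeff i = 0 := by
    intro i hi0 hin
    have := (Finset.sum_eq_zero_iff_of_nonneg hnonneg).mp key i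
      (Finset.mem_range.mpr (by omega))
    have hs : 0 < Real.sin (i * (π / n)) := by
      apply Real.sin_pos_of_pos_of_lt_pi
      · positivity
      · have hlt : (i : ℝ) < n := by exact_mod_cast hin
        calc (i:ℝ) * (π / n) < n * (π / n) := by gcongr
          _ = π := by field_simp
    have hrp : (0:ℝ) < r ^ i := by positivity
    rcases mul_eq_zero.mp this with h | h
    · rcases mul_eq_zero.mp h with h' | h'
      · exact h'
      · exact absurd h' hrp.ne'
    · exact absurd h hs.ne'
  have hq0 : q ≠ 0 := fun h => h0 (by simp [h])
  have han : q.coeff n ≠ 0 := by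
    have := Polynomial.leadingCoeff_ne_zero.mpr hq0
    rwa [Polynomial.leadingCoeff, hdeg] at this
  have ha0 : q.coeff 0 ≠ 0 := by
    rwa [Polynomial.coeff_zero_eq_eval_zero]
  refine ⟨q.coeff n, q.coeff 0, lt_of_le_of_ne (hcoeff n) (Ne.symm han),
    lt_of_le_of_ne (hcoeff 0) (Ne.symm ha0), ?_⟩
  ext j
  rw [Polynomial.coeff_add, Polynomial.coeff_C_mul, Polynomial.coeff_X_pow,
    Polynomial.coeff_C]
  rcases eq_or_ne j n with rfl | hjn
  · have hne : j ≠ 0 := by omega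
    simp [hne]
  · rcases eq_or_ne j 0 with rfl | hj0
    · have : n ≠ 0 := by omega
      simp [Ne.symm this]
    · simp only [if_neg hjn, if_neg hj0, mul_zero, zero_add, add_zero]
      rcases lt_or_ge j n with h | h
      · exact hzero j (Nat.pos_of_ne_zero hj0) h
      · exact Polynomial.coeff_eq_zero_of_natDegree_lt (by omega)
end
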